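/- Let H be a real Hilbert space, let A : H → Set H be monotone, let γ > 0, and let x, z, p ∈ H satisfy 0 ∈ A z and (1/γ)·(x − p) ∈ A p (so p is the value at x of the resolvent of γA). Let t > 0 satisfy ‖p − z‖ ≤ t·‖x − p‖, let λ ∈ [1,2], and set y := (1−λ)x + λp. Then ‖y − z‖² ≤ (1 − λ(2−λ)/(1+t²))·‖x − z‖². -/

import Mathlib

open scoped RealInnerProductSpace

/-- Let `A` be monotone on a real Hilbert space, `γ > 0`, `0 ∈ A z`, and
`(1/γ)(x - p) ∈ A p` (so `p = J_{γA} x`).  Let `t > 0` with `‖p - z‖ ≤ t‖x - p‖`,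
`λ ∈ [1,2]` and `y := (1-λ)x + λp`.  Then
`‖y - z‖² ≤ (1 - λ(2-λ)/(1+t²))‖x - z‖²`. -/
theorem stmt_10 {H : Type*} [NormedAddCommGroup H] [InnerProductSpace ℝ H] [CompleteSpace H]
    (A : H → Set H)
    (hmono : ∀ x y u v : H, u ∈ A x → v ∈ A y → 0 ≤ ⟪x - y, u - v⟫)
    (γ : ℝ) (hγ : 0 < γ)
    (x z p : H) (hz : (0 : H) ∈ A z) (hp : (1 / γ) • (x - p) ∈ A p)
    (t : ℝ) (ht : 0 < t) (htz : ‖p - z‖ ≤ t * ‖x - p‖)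
    (lam : ℝ) (hlam : lam ∈ Set.Icc (1 : ℝ) 2)
    (y : H) (hy : y = (1 - lam) • x + lam • p) :
    ‖y - z‖ ^ 2 ≤ (1 - lam * (2 - lam) / (1 + t ^ 2)) * ‖x - z‖ ^ 2 := by
  obtain ⟨hl1, hl2⟩ := hlam
  have hmon := hmono p z ((1 / γ) • (x - p)) 0 hp hz
  rw [sub_zero, real_inner_smul_right] at hmon
  have hc : 0 ≤ ⟪x - p, p - z⟫ := by
    have h1γ : 0 < 1 / γ := by positivity
    have := nonneg_of_mul_nonneg_right hmon h1γ
    rwa [real_inner_comm] at this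
  set a := ‖x - p‖ with ha
  set b := ‖p - z‖ with hb
  set c := ⟪x - p, p - z⟫ with hcdef
  have hxz : ‖x - z‖ ^ 2 = a ^ 2 + 2 * c + b ^ 2 := by
    have : x - z = (x - p) + (p - z) := by abel
    rw [this, @norm_add_sq_real]
  have hip : ⟪x - z, x - p⟫ = a ^ 2 + c := by
    have : x - z = (x - p) + (p - z) := by abel
    have hs : (inner ℝ (p - z) (x - p) : ℝ) = c := real_inner_comm _ _
    rw [this, inner_add_left, real_inner_self_eq_norm_sq, hs]
  have hyz : ‖y - z‖ ^ 2 = ‖x - z‖ ^ 2 - 2 * lam * (a ^ 2 + c) + lam ^ 2 * a ^ 2 := by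
    have hy' : y - z = (x - z) - lam • (x - p) := by
      rw [hy, sub_smul, one_smul, smul_sub]; abel
    rw [hy', @norm_sub_sq_real, real_inner_smul_right, hip, norm_smul, mul_pow]
    simp [abs_of_nonneg (le_trans zero_le_one hl1)]
    ring
  have h1t : (0 : ℝ) < 1 + t ^ 2 := by positivity
  have ha0 : 0 ≤ a := norm_nonneg _
  have hb0 : 0 ≤ b := norm_nonneg _
  have key : (1 + t ^ 2) * ‖y - z‖ ^ 2 ≤ ((1 + t ^ 2) - lam * (2 - lam)) * ‖x - z‖ ^ 2 := by
    rw [hyz, hxz]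
    have hbb : b ^ 2 ≤ t ^ 2 * a ^ 2 := by
      have := mul_le_mul htz htz hb0 (by positivity : (0:ℝ) ≤ t * a)
      nlinarith
    have hlz : (0:ℝ) ≤ lam * (2 - lam) := by nlinarith
    have h1 : 0 ≤ lam * (2 - lam) * (t ^ 2 * a ^ 2 - b ^ 2) := by nlinarith
    have h2 : 0 ≤ (2 * lam * (t ^ 2 - 1 + lam)) * c := by
      apply mul_nonneg _ hc
      nlinarith [sq_nonneg t]
    nlinarith [h1, h2]
  rw [show (1 - lam * (2 - lam) / (1 + t ^ 2)) = ((1 + t ^ 2) - lam * (2 - lam)) / (1 + t ^ 2) by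
      field_simp, div_mul_eq_mul_div, le_div_iff₀ h1t]
  linarith [key]
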